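/- Let W : ℝ^N × ℝⁿ → ℝⁿ be continuous and suppose there exist K, L ≥ 0 with |W(s,y)| ≤ K·|s| and |W(s,y) − W(s,y')| ≤ L·|s|·|y − y'| for all s ∈ ℝ^N, y, y' ∈ ℝⁿ. Then for every t ∈ ℝ^N and x ∈ ℝⁿ there exists a unique continuous ω_{t,x} : [0,1] → ℝⁿ with ω_{t,x}(0) = x which is differentiable on (0,1] with ω_{t,x}'(ε) = (1/ε)·W(εt, ω_{t,x}(ε)) for all ε ∈ (0,1]. Moreover, setting γ(t,x) := ω_{t,x}(1), one has γ(0,x) = x for all x, and for every t ∈ ℝ^N and x ∈ ℝⁿ the map ε ↦ γ(εt, x) is differentiable at ε = 1 with derivative W(t, γ(t,x)). -/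

import Mathlib

open Set MeasureTheory Filter Topology

namespace Stmt3Aux

variable {N n : ℕ}
  {W : EuclideanSpace ℝ (Fin N) → EuclideanSpace ℝ (Fin n) → EuclideanSpace ℝ (Fin n)}
  (hWc : Continuous (fun p : EuclideanSpace ℝ (Fin N) × EuclideanSpace ℝ (Fin n) =>
      W p.1 p.2))
  {K L : ℝ} (hK : 0 ≤ K) (hL : 0 ≤ L)
  (hbound : ∀ s y, ‖W s y‖ ≤ K * ‖s‖)
  (hLip : ∀ s y y', ‖W s y - W s y'‖ ≤ L * ‖s‖ * ‖y - y'‖)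
  (t : EuclideanSpace ℝ (Fin N)) (x : EuclideanSpace ℝ (Fin n))

include hbound hK in
lemma gbound (s : ℝ) (y : EuclideanSpace ℝ (Fin n)) :
    ‖s⁻¹ • W (s • t) y‖ ≤ K * ‖t‖ := by
  rcases eq_or_ne s 0 with rfl | hs
  · simp [norm_smul]
    positivity
  · have h1 : ‖s⁻¹ • W (s • t) y‖ = |s|⁻¹ * ‖W (s • t) y‖ := by
      rw [norm_smul, Real.norm_eq_abs, abs_inv]
    have h2 : ‖W (s • t) y‖ ≤ K * (|s| * ‖t‖) := by
      have := hbound (s • t) y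
      rwa [norm_smul, Real.norm_eq_abs] at this
    have habs : (0:ℝ) < |s| := abs_pos.2 hs
    rw [h1]
    calc |s|⁻¹ * ‖W (s • t) y‖ ≤ |s|⁻¹ * (K * (|s| * ‖t‖)) := by
          gcongr
      _ = K * ‖t‖ := by field_simp

include hLip hL in
lemma glip (s : ℝ) (y y' : EuclideanSpace ℝ (Fin n)) :
    ‖s⁻¹ • W (s • t) y - s⁻¹ • W (s • t) y'‖ ≤ (L * ‖t‖) * ‖y - y'‖ := by
  rcases eq_or_ne s 0 with rfl | hs
  · simp
    positivity
  · have h1 : s⁻¹ • W (s • t) y - s⁻¹ • W (s • t) y'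
        = s⁻¹ • (W (s • t) y - W (s • t) y') := by rw [smul_sub]
    have h2 : ‖W (s • t) y - W (s • t) y'‖ ≤ L * (|s| * ‖t‖) * ‖y - y'‖ := by
      have := hLip (s • t) y y'
      rwa [norm_smul, Real.norm_eq_abs] at this
    have habs : (0:ℝ) < |s| := abs_pos.2 hs
    rw [h1, norm_smul, Real.norm_eq_abs, abs_inv]
    calc |s|⁻¹ * ‖W (s • t) y - W (s • t) y'‖
        ≤ |s|⁻¹ * (L * (|s| * ‖t‖) * ‖y - y'‖) := by gcongr
      _ = (L * ‖t‖) * ‖y - y'‖ := by field_simp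

include hWc in
lemma gcont {u : ℝ → EuclideanSpace ℝ (Fin n)} (hu : Continuous u) {s₀ : ℝ} (hs₀ : s₀ ≠ 0) :
    ContinuousAt (fun s : ℝ => s⁻¹ • W (s • t) (u s)) s₀ := by
  have h1 : ContinuousAt (fun s : ℝ => s⁻¹) s₀ := continuousAt_inv₀ hs₀
  have h2 : Continuous (fun s : ℝ => W (s • t) (u s)) :=
    hWc.comp ((continuous_id.smul continuous_const).prodMk hu)
  exact h1.smul h2.continuousAt

include hWc in
lemma gmeas {u : ℝ → EuclideanSpace ℝ (Fin n)} (hu : Continuous u) :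
    Measurable (fun s : ℝ => s⁻¹ • W (s • t) (u s)) := by
  have h2 : Continuous (fun s : ℝ => W (s • t) (u s)) :=
    hWc.comp ((continuous_id.smul continuous_const).prodMk hu)
  exact measurable_inv.smul h2.measurable

include hWc hK hbound in
lemma gint {u : ℝ → EuclideanSpace ℝ (Fin n)} (hu : Continuous u) (a b : ℝ) :
    IntervalIntegrable (fun s : ℝ => s⁻¹ • W (s • t) (u s)) volume a b := by
  rw [intervalIntegrable_iff]
  apply Measure.integrableOn_of_bounded (M := K * ‖t‖) measure_Ioc_lt_top.ne
    (gmeas hWc t hu).aestronglyMeasurable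
  exact ae_of_all _ fun s => gbound hK hbound t s (u s)

/-- Extension of a continuous map on `Icc 0 1` to `ℝ` by projection. -/
noncomputable def ext (F : C(Icc (0:ℝ) 1, EuclideanSpace ℝ (Fin n))) (s : ℝ) :
    EuclideanSpace ℝ (Fin n) :=
  F (projIcc 0 1 zero_le_one s)

lemma ext_continuous (F : C(Icc (0:ℝ) 1, EuclideanSpace ℝ (Fin n))) :
    Continuous (ext F) := F.continuous.comp continuous_projIcc

lemma ext_of_mem (F : C(Icc (0:ℝ) 1, EuclideanSpace ℝ (Fin n))) {s : ℝ}
    (hs : s ∈ Icc (0:ℝ) 1) : ext F s = F ⟨s, hs⟩ := by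
  unfold ext
  rw [projIcc_of_mem]

include hWc hK hbound in
lemma Tcont (F : C(Icc (0:ℝ) 1, EuclideanSpace ℝ (Fin n))) :
    Continuous (fun e : Icc (0:ℝ) 1 =>
      x + ∫ s in (0:ℝ)..(e:ℝ), s⁻¹ • W (s • t) (ext F s)) := by
  apply continuous_const.add
  have h1 : ContinuousOn (fun r : ℝ => ∫ s in (0:ℝ)..r, s⁻¹ • W (s • t) (ext F s))
      (uIcc (0:ℝ) 1) :=
    intervalIntegral.continuousOn_primitive_interval'
      (gint hWc hK hbound t (ext_continuous F) 0 1) left_mem_uIcc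
  rw [uIcc_of_le zero_le_one] at h1
  exact h1.comp_continuous continuous_subtype_val fun e => e.2

/-- The Picard operator for the singular ODE. -/
noncomputable def Tmap (hWc : Continuous (fun p : EuclideanSpace ℝ (Fin N) × EuclideanSpace ℝ (Fin n) =>
      W p.1 p.2)) (hK : 0 ≤ K) (hbound : ∀ s y, ‖W s y‖ ≤ K * ‖s‖)
    (t : EuclideanSpace ℝ (Fin N)) (x : EuclideanSpace ℝ (Fin n))
    (F : C(Icc (0:ℝ) 1, EuclideanSpace ℝ (Fin n))) :
    C(Icc (0:ℝ) 1, EuclideanSpace ℝ (Fin n)) :=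
  ⟨_, Tcont hWc hK hbound t x F⟩

lemma Tmap_apply (F : C(Icc (0:ℝ) 1, EuclideanSpace ℝ (Fin n))) (e : Icc (0:ℝ) 1) :
    Tmap hWc hK hbound t x F e
      = x + ∫ s in (0:ℝ)..(e:ℝ), s⁻¹ • W (s • t) (ext F s) := rfl

include hWc hK hL hbound hLip in
lemma iterate_est (F G : C(Icc (0:ℝ) 1, EuclideanSpace ℝ (Fin n))) (k : ℕ) :
    ∀ e : Icc (0:ℝ) 1,
      dist ((Tmap hWc hK hbound t x)^[k] F e) ((Tmap hWc hK hbound t x)^[k] G e)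
        ≤ (L * ‖t‖)^k * (e:ℝ)^k / k.factorial * dist F G := by
  induction k with
  | zero => intro e; simpa using ContinuousMap.dist_apply_le_dist e
  | succ k ih =>
    intro e
    have e0 : (0:ℝ) ≤ (e:ℝ) := e.2.1
    have e1 : (e:ℝ) ≤ 1 := e.2.2
    set F' := (Tmap hWc hK hbound t x)^[k] F with hF'
    set G' := (Tmap hWc hK hbound t x)^[k] G with hG'
    set C : ℝ := (L * ‖t‖)^(k+1) / k.factorial * dist F G with hC
    have hC0 : 0 ≤ C := by
      have : (0:ℝ) ≤ L * ‖t‖ := by positivity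
      positivity
    rw [Function.iterate_succ_apply', Function.iterate_succ_apply',
      dist_eq_norm, Tmap_apply, Tmap_apply, add_sub_add_left_eq_sub,
      ← intervalIntegral.integral_sub
        (gint hWc hK hbound t (ext_continuous F') 0 e)
        (gint hWc hK hbound t (ext_continuous G') 0 e)]
    have hb : ∀ᵐ s ∂(volume.restrict (uIoc (0:ℝ) (e:ℝ))),
        ‖(s⁻¹ • W (s • t) (ext F' s)) - (s⁻¹ • W (s • t) (ext G' s))‖ ≤ C * s^k := by
      refine ae_restrict_of_forall_mem measurableSet_uIoc fun s hs => ?_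
      rw [uIoc_of_le e0] at hs
      have hsIcc : s ∈ Icc (0:ℝ) 1 := ⟨hs.1.le, hs.2.trans e1⟩
      have h1 := glip hL hLip t s (ext F' s) (ext G' s)
      have h2 : ‖ext F' s - ext G' s‖ ≤ (L * ‖t‖)^k * s^k / k.factorial * dist F G := by
        rw [ext_of_mem F' hsIcc, ext_of_mem G' hsIcc, ← dist_eq_norm]
        simpa using ih ⟨s, hsIcc⟩
      have hLt : (0:ℝ) ≤ L * ‖t‖ := by positivity
      calc ‖(s⁻¹ • W (s • t) (ext F' s)) - (s⁻¹ • W (s • t) (ext G' s))‖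
          ≤ (L * ‖t‖) * ‖ext F' s - ext G' s‖ := h1
        _ ≤ (L * ‖t‖) * ((L * ‖t‖)^k * s^k / k.factorial * dist F G) := by gcongr
        _ = C * s^k := by rw [hC]; ring
    have hbi : IntervalIntegrable (fun s : ℝ => C * s^k) volume 0 e :=
      (continuous_const.mul (continuous_pow k)).intervalIntegrable 0 e
    have key := intervalIntegral.norm_integral_le_abs_of_norm_le hb hbi
    have hval : (∫ s in (0:ℝ)..(e:ℝ), C * s^k) = C * ((e:ℝ)^(k+1) / (k+1)) := by
      rw [intervalIntegral.integral_const_mul, integral_pow]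
      norm_num
    refine key.trans ?_
    rw [hval, abs_of_nonneg (by positivity)]
    have hfac : ((k+1).factorial : ℝ) = (k+1) * k.factorial := by
      rw [Nat.factorial_succ]; push_cast; ring
    rw [hC, hfac]
    have hk0 : (0:ℝ) < k.factorial := by positivity
    apply le_of_eq
    field_simp

include hWc hK hL hbound hLip in
lemma exists_fixed :
    ∃ F : C(Icc (0:ℝ) 1, EuclideanSpace ℝ (Fin n)),
      Tmap hWc hK hbound t x F = F ∧
      ∀ G : C(Icc (0:ℝ) 1, EuclideanSpace ℝ (Fin n)),
        Tmap hWc hK hbound t x G = G → G = F := by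
  haveI : Nonempty (C(Icc (0:ℝ) 1, EuclideanSpace ℝ (Fin n))) :=
    ⟨ContinuousMap.const _ x⟩
  set T := Tmap hWc hK hbound t x with hT
  have hLt : (0:ℝ) ≤ L * ‖t‖ := by positivity
  obtain ⟨k, hk⟩ : ∃ k : ℕ, (L * ‖t‖)^k / k.factorial < 1 :=
    ((FloorSemiring.tendsto_pow_div_factorial_atTop (L * ‖t‖)).eventually
      (gt_mem_nhds one_pos)).exists
  have hq0 : (0:ℝ) ≤ (L * ‖t‖)^k / k.factorial := by positivity
  set c : NNReal := ⟨(L * ‖t‖)^k / k.factorial, hq0⟩ with hc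
  have hdist : ∀ F G : C(Icc (0:ℝ) 1, EuclideanSpace ℝ (Fin n)),
      dist (T^[k] F) (T^[k] G) ≤ (c : ℝ) * dist F G := by
    intro F G
    rw [ContinuousMap.dist_le (by positivity)]
    intro e
    refine (iterate_est hWc hK hL hbound hLip t x F G k e).trans ?_
    have e0 : (0:ℝ) ≤ (e:ℝ) := e.2.1
    have e1 : (e:ℝ) ≤ 1 := e.2.2
    have : (L * ‖t‖)^k * (e:ℝ)^k / k.factorial * dist F G
        ≤ (L * ‖t‖)^k * 1 / k.factorial * dist F G := by
      gcongr
      exact pow_le_one₀ e0 e1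
    rw [mul_one] at this; exact this
  have hcontr : ContractingWith c (T^[k]) := by
    constructor
    · rwa [← NNReal.coe_lt_coe]
    · exact LipschitzWith.of_dist_le_mul hdist
  refine ⟨hcontr.fixedPoint (T^[k]), hcontr.isFixedPt_fixedPoint_iterate, ?_⟩
  intro G hG
  exact hcontr.fixedPoint_unique ((Function.IsFixedPt.iterate hG k))

include hWc hK hL hbound hLip in
lemma key :
    ∃ f : ℝ → EuclideanSpace ℝ (Fin n),
      ContinuousOn f (Icc 0 1) ∧ f 0 = x ∧
      (∀ ε ∈ Ioc (0:ℝ) 1, HasDerivWithinAt f (ε⁻¹ • W (ε • t) (f ε)) (Icc 0 1) ε) ∧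
      (∀ ω' : ℝ → EuclideanSpace ℝ (Fin n), ContinuousOn ω' (Icc 0 1) → ω' 0 = x →
        (∀ ε ∈ Ioc (0:ℝ) 1, HasDerivWithinAt ω' (ε⁻¹ • W (ε • t) (ω' ε)) (Icc 0 1) ε) →
        ∀ ε ∈ Icc (0:ℝ) 1, ω' ε = f ε) := by
  obtain ⟨F, hfix, huniq⟩ := exists_fixed hWc hK hL hbound hLip t x
  set f : ℝ → EuclideanSpace ℝ (Fin n) := ext F with hf
  have hfc : Continuous f := ext_continuous F
  have heq : ∀ r ∈ Icc (0:ℝ) 1,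
      f r = x + ∫ s in (0:ℝ)..r, s⁻¹ • W (s • t) (f s) := by
    intro r hr
    have h1 : Tmap hWc hK hbound t x F ⟨r, hr⟩ = F ⟨r, hr⟩ := by rw [hfix]
    rw [Tmap_apply] at h1
    rw [hf, ext_of_mem F hr, ← h1]
  have hf0 : f 0 = x := by
    have := heq 0 ⟨le_refl 0, zero_le_one⟩
    simpa using this
  refine ⟨f, hfc.continuousOn, hf0, ?_, ?_⟩
  · -- derivative
    intro ε hε
    have hεI : ε ∈ Icc (0:ℝ) 1 := ⟨hε.1.le, hε.2⟩
    haveI : Fact (ε ∈ Icc (0:ℝ) 1) := ⟨hεI⟩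
    have hP : HasDerivWithinAt
        (fun u => x + ∫ s in (0:ℝ)..u, s⁻¹ • W (s • t) (f s))
        (ε⁻¹ • W (ε • t) (f ε)) (Icc 0 1) ε := by
      apply HasDerivWithinAt.const_add
      exact intervalIntegral.integral_hasDerivWithinAt_right
        (gint hWc hK hbound t hfc 0 ε)
        ⟨Icc 0 1, self_mem_nhdsWithin, (gmeas hWc t hfc).aestronglyMeasurable.restrict⟩
        ((gcont hWc t hfc hε.1.ne').continuousWithinAt)
    exact hP.congr (fun y hy => heq y hy) (heq ε hεI)
  · -- uniqueness
    intro ω' hc h0 hderiv ε hε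
    set G' : C(Icc (0:ℝ) 1, EuclideanSpace ℝ (Fin n)) := ⟨fun e => ω' e, hc.restrict⟩ with hG'
    set w : ℝ → EuclideanSpace ℝ (Fin n) := ext G' with hw
    have hwc : Continuous w := ext_continuous G'
    have hw_eq : ∀ r ∈ Icc (0:ℝ) 1, w r = ω' r := by
      intro r hr
      rw [hw, ext_of_mem G' hr]
      rfl
    have hw0 : w 0 = x := by rw [hw_eq 0 ⟨le_refl 0, zero_le_one⟩, h0]
    have hint0 := gint hWc hK hbound t hwc
    have hfp : ∀ e ∈ Icc (0:ℝ) 1, w e = x + ∫ s in (0:ℝ)..e, s⁻¹ • W (s • t) (w s) := by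
      intro e he
      rcases eq_or_lt_of_le he.1 with he0 | he0
      · rw [← he0]
        simp [hw0]
      · -- 0 < e : FTC on [δ, e] and limit δ → 0⁺
        have key1 : ∀ δ ∈ Ioo (0:ℝ) e,
            (∫ s in δ..e, s⁻¹ • W (s • t) (w s)) = w e - w δ := by
          intro δ hδ
          apply intervalIntegral.integral_eq_sub_of_hasDeriv_right_of_le hδ.2.le
            hwc.continuousOn _ (hint0 δ e)
          intro s hs
          have hs1 : s ∈ Ioc (0:ℝ) 1 := ⟨hδ.1.trans hs.1, (hs.2.le.trans he.2)⟩
          have hs1' : s < 1 := lt_of_lt_of_le hs.2 he.2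
          have hnhds : Icc (0:ℝ) 1 ∈ 𝓝 s := Icc_mem_nhds hs1.1 hs1'
          have hda : HasDerivAt ω' (s⁻¹ • W (s • t) (ω' s)) s :=
            (hderiv s hs1).hasDerivAt hnhds
          have hweq : w =ᶠ[𝓝 s] ω' := eventually_of_mem hnhds fun y hy => hw_eq y hy
          have hdw : HasDerivAt w (s⁻¹ • W (s • t) (w s)) s := by
            rw [hw_eq s ⟨hs1.1.le, hs1.2⟩]
            exact hda.congr_of_eventuallyEq hweq
          exact hdw.hasDerivWithinAt
        have hIoo : Ioo (0:ℝ) e ∈ 𝓝[>] (0:ℝ) :=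
          Ioo_mem_nhdsGT_of_mem ⟨le_refl 0, he0⟩
        have lim1 : Tendsto (fun δ => w e - w δ) (𝓝[>] (0:ℝ)) (𝓝 (w e - x)) := by
          have : Tendsto w (𝓝[>] (0:ℝ)) (𝓝 x) := by
            have := (hwc.tendsto 0).mono_left (nhdsWithin_le_nhds (s := Ioi (0:ℝ)))
            rwa [hw0] at this
          exact tendsto_const_nhds.sub this
        have hsmall : Tendsto (fun δ => ∫ s in (0:ℝ)..δ, s⁻¹ • W (s • t) (w s))
            (𝓝[>] (0:ℝ)) (𝓝 0) := by
          apply squeeze_zero_norm' (f := fun δ => ∫ s in (0:ℝ)..δ, s⁻¹ • W (s • t) (w s))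
            (a := fun δ => (K * ‖t‖) * |δ|)
          · filter_upwards with δ
            have := intervalIntegral.norm_integral_le_of_norm_le_const
              (f := fun s => s⁻¹ • W (s • t) (w s)) (C := K * ‖t‖) (a := 0) (b := δ)
              (fun s _ => gbound hK hbound t s (w s))
            simpa using this
          · have : Tendsto (fun δ : ℝ => (K * ‖t‖) * |δ|) (𝓝 0) (𝓝 ((K * ‖t‖) * |0|)) :=
              (continuous_const.mul continuous_abs).tendsto 0
            simpa using this.mono_left (nhdsWithin_le_nhds (s := Ioi (0:ℝ)))
        have lim2 : Tendsto (fun δ => w e - w δ) (𝓝[>] (0:ℝ))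
            (𝓝 (∫ s in (0:ℝ)..e, s⁻¹ • W (s • t) (w s))) := by
          have heq2 : ∀ᶠ δ in 𝓝[>] (0:ℝ),
              w e - w δ = (∫ s in (0:ℝ)..e, s⁻¹ • W (s • t) (w s))
                - ∫ s in (0:ℝ)..δ, s⁻¹ • W (s • t) (w s) := by
            filter_upwards [hIoo] with δ hδ
            rw [← key1 δ hδ, ← intervalIntegral.integral_interval_sub_left (hint0 0 e) (hint0 0 δ)]
          rw [tendsto_congr' heq2]
          have := tendsto_const_nhds
            (x := ∫ s in (0:ℝ)..e, s⁻¹ • W (s • t) (w s)) (f := 𝓝[>] (0:ℝ)) |>.sub hsmall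
          simpa using this
        have := tendsto_nhds_unique lim1 lim2
        rw [sub_eq_iff_eq_add'] at this
        exact this
    have hTG : Tmap hWc hK hbound t x G' = G' := by
      ext e
      rw [Tmap_apply]
      have h1 := hfp e e.2
      rw [← h1, hw, ext_of_mem G' e.2]
    have hGF : G' = F := huniq G' hTG
    have : ω' ε = G' ⟨ε, hε⟩ := rfl
    rw [this, hGF, hf, ext_of_mem F hε]

end Stmt3Aux


/-- existence and uniqueness for the singular ODE
`ω'(ε) = (1/ε) W(εt, ω(ε))`, `ω(0) = x`, on `[0,1]`, and the basic properties of the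
resulting map `γ(t,x) := ω_{t,x}(1)`. -/
theorem stmt_3 (N n : ℕ)
    (W : EuclideanSpace ℝ (Fin N) → EuclideanSpace ℝ (Fin n) → EuclideanSpace ℝ (Fin n))
    (hWc : Continuous (fun p : EuclideanSpace ℝ (Fin N) × EuclideanSpace ℝ (Fin n) =>
      W p.1 p.2))
    (K L : ℝ) (hK : 0 ≤ K) (hL : 0 ≤ L)
    (hbound : ∀ s y, ‖W s y‖ ≤ K * ‖s‖)
    (hLip : ∀ s y y', ‖W s y - W s y'‖ ≤ L * ‖s‖ * ‖y - y'‖) :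
    ∃ ω : EuclideanSpace ℝ (Fin N) → EuclideanSpace ℝ (Fin n) → ℝ →
        EuclideanSpace ℝ (Fin n),
      (∀ t x, ContinuousOn (ω t x) (Icc 0 1) ∧ ω t x 0 = x ∧
        ∀ ε ∈ Ioc (0:ℝ) 1,
          HasDerivWithinAt (ω t x) (ε⁻¹ • W (ε • t) (ω t x ε)) (Icc 0 1) ε) ∧
      (∀ t x (ω' : ℝ → EuclideanSpace ℝ (Fin n)),
        ContinuousOn ω' (Icc 0 1) → ω' 0 = x →
        (∀ ε ∈ Ioc (0:ℝ) 1,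
          HasDerivWithinAt ω' (ε⁻¹ • W (ε • t) (ω' ε)) (Icc 0 1) ε) →
        ∀ ε ∈ Icc (0:ℝ) 1, ω' ε = ω t x ε) ∧
      (∀ x, ω 0 x 1 = x) ∧
      (∀ t x, HasDerivAt (fun ε : ℝ => ω (ε • t) x 1) (W t (ω t x 1)) 1) := by
  classical
  choose ω h1 h2 h3 h4 using fun (t : EuclideanSpace ℝ (Fin N))
    (x : EuclideanSpace ℝ (Fin n)) => Stmt3Aux.key hWc hK hL hbound hLip t x
  have hW0 : ∀ y, W 0 y = 0 := fun y => by
    have := hbound 0 y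
    simpa using this
  -- the scaling identity
  have scale : ∀ (c : ℝ), c ∈ Icc (0:ℝ) 1 → ∀ t x, ∀ δ ∈ Icc (0:ℝ) 1,
      ω t x (c * δ) = ω (c • t) x δ := by
    intro c hc t x
    have hmaps : MapsTo (fun δ : ℝ => c * δ) (Icc 0 1) (Icc 0 1) := by
      intro δ hδ
      exact ⟨mul_nonneg hc.1 hδ.1, mul_le_one₀ hc.2 hδ.1 hδ.2⟩
    apply h4 (c • t) x (fun δ => ω t x (c * δ))
    · exact (h1 t x).comp (continuous_const.mul continuous_id).continuousOn hmaps
    · rw [mul_zero]; exact h2 t x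
    · intro δ hδ
      rcases eq_or_ne c 0 with rfl | hc0
      · simp only [zero_mul, zero_smul, smul_zero]
        rw [hW0, smul_zero]
        exact hasDerivWithinAt_const _ _ _
      · have hc0' : 0 < c := lt_of_le_of_ne hc.1 (Ne.symm hc0)
        have hmem : c * δ ∈ Ioc (0:ℝ) 1 :=
          ⟨mul_pos hc0' hδ.1, mul_le_one₀ hc.2 hδ.1.le hδ.2⟩
        have hd := h3 t x (c * δ) hmem
        have hmul : HasDerivWithinAt (fun y : ℝ => c * y) c (Icc 0 1) δ := by
          simpa using ((hasDerivAt_id δ).const_mul c).hasDerivWithinAt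
        have hcomp := HasDerivWithinAt.scomp δ hd hmul hmaps
        have e1 : δ • (c • t) = (c * δ) • t := by rw [smul_smul, mul_comm]
        have e2 : (δ:ℝ)⁻¹ = c * (c * δ)⁻¹ := by
          rw [mul_inv, ← mul_assoc, mul_inv_cancel₀ hc0, one_mul]
        rw [e1, e2, ← smul_smul]
        exact hcomp
  refine ⟨ω, fun t x => ⟨h1 t x, h2 t x, h3 t x⟩, h4, ?_, ?_⟩
  · -- ω 0 x 1 = x
    intro x
    have := h4 0 x (fun _ => x) continuousOn_const rfl ?_ 1 ⟨zero_le_one, le_refl 1⟩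
    · exact this.symm
    · intro ε hε
      rw [smul_zero, hW0, smul_zero]
      exact hasDerivWithinAt_const _ _ _
  · -- derivative of ε ↦ ω (ε • t) x 1 at ε = 1
    intro t x
    set t' : EuclideanSpace ℝ (Fin N) := (2:ℝ) • t with ht'
    have hhalf : ∀ ε ∈ Icc (0:ℝ) 2, ω (ε • t) x 1 = ω t' x (ε / 2) := by
      intro ε hε
      have h := scale (ε/2) ⟨by linarith [hε.1], by linarith [hε.2]⟩ t' x 1
        ⟨zero_le_one, le_refl 1⟩
      have he : (ε/2) • t' = ε • t := by rw [ht', smul_smul]; norm_num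
      rw [mul_one] at h
      rw [← he]
      exact h.symm
    have he2 : ((1:ℝ)/2) • t' = t := by rw [ht', smul_smul]; norm_num
    have hval : ω t' x (1/2) = ω t x 1 := by
      have h := scale (1/2) (by norm_num) t' x 1 ⟨zero_le_one, le_refl 1⟩
      rw [mul_one, he2] at h
      exact h
    have hd2 : HasDerivAt (ω t' x) ((2:ℝ) • W t (ω t x 1)) (1/2) := by
      have h := h3 t' x (1/2) (by norm_num)
      have hmem : Icc (0:ℝ) 1 ∈ 𝓝 (1/2 : ℝ) := Icc_mem_nhds (by norm_num) (by norm_num)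
      have h' := h.hasDerivAt hmem
      have hv : ((1:ℝ)/2)⁻¹ • W (((1:ℝ)/2) • t') (ω t' x (1/2)) = (2:ℝ) • W t (ω t x 1) := by
        rw [he2, hval]
        norm_num
      rwa [hv] at h'
    have hcomp : HasDerivAt (fun ε : ℝ => ω t' x (ε / 2)) (W t (ω t x 1)) 1 := by
      have hh : HasDerivAt (fun ε : ℝ => ε / 2) ((1:ℝ)/2) 1 := by
        simpa using (hasDerivAt_id (1:ℝ)).div_const 2
      have hsc := HasDerivAt.scomp (1:ℝ) hd2 hh
      have e : ((1:ℝ)/2) • ((2:ℝ) • W t (ω t x 1)) = W t (ω t x 1) := by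
        rw [smul_smul]; norm_num
      rw [e] at hsc
      exact hsc
    have hev : (fun ε : ℝ => ω (ε • t) x 1) =ᶠ[𝓝 (1:ℝ)] (fun ε => ω t' x (ε / 2)) := by
      have hIoo : Ioo (0:ℝ) 2 ∈ 𝓝 (1:ℝ) := Ioo_mem_nhds (by norm_num) (by norm_num)
      filter_upwards [hIoo] with ε hε
      exact hhalf ε ⟨hε.1.le, hε.2.le⟩
    exact hcomp.congr_of_eventuallyEq hev
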